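/- Let V be a finite dimensional vector space over a field F and let E be a set of pairwise commuting triangularizable endomorphisms of V. Then V decomposes as the direct sum, over the (finitely many) simultaneous weights τ : E → F with nonzero weight space, of the generalized weight spaces V(τ, gen) = {v ∈ V | for all e ∈ E there exists k with (e − τ(e)·Id)^k v = 0}. In particular, if V ≠ 0 there exists a simultaneous eigenvector for all elements of E. -/

import Mathlib

open Module Polynomial

section AuxLemmas
variable {ι F V : Type*} [Field F] [AddCommGroup V] [Module F V]

-- Lemma 1
lemma aux_ker_prod (f : Module.End F V) (s : Finset F) (k : F → ℕ) :
    LinearMap.ker (aeval f (∏ μ ∈ s, (X - C μ) ^ (k μ))) ≤ ⨆ μ, f.maxGenEigenspace μ := by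
  classical
  induction s using Finset.induction_on with
  | empty => simp [LinearMap.ker_eq_bot_of_injective, Module.End.one_eq_id]
  | @insert a s ha ih =>
    rw [Finset.prod_insert ha]
    have hcop : IsCoprime ((X - C a) ^ k a) (∏ μ ∈ s, (X - C μ) ^ (k μ)) := by
      refine (IsCoprime.prod_right fun μ hμ => ?_).pow_left
      exact ((Polynomial.isCoprime_X_sub_C_of_isUnit_sub
        ((sub_ne_zero.2 (fun h : a = μ => ha (h ▸ hμ))).isUnit)).pow_right)
    rw [← Polynomial.sup_ker_aeval_eq_ker_aeval_mul_of_coprime f hcop]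
    refine sup_le (le_trans ?_ (le_iSup _ a)) ih
    intro x hx
    rw [LinearMap.mem_ker] at hx
    rw [Module.End.mem_maxGenEigenspace]
    refine ⟨k a, ?_⟩
    have : ((f - a • (1 : Module.End F V)) ^ k a) = aeval f ((X - C a) ^ k a) := by
      rw [map_pow, map_sub, aeval_X, aeval_C]
      ext v
      simp [Algebra.algebraMap_eq_smul_one]
    rw [this, hx]

-- Lemma 2
lemma aux_sup_top [FiniteDimensional F V] (f : Module.End F V)
    (h : (LinearMap.charpoly f).Splits) :
    ⨆ μ, f.maxGenEigenspace μ = ⊤ := by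
  classical
  have h0 : aeval f (LinearMap.charpoly f) = 0 := LinearMap.aeval_self_charpoly f
  refine top_le_iff.mp ?_
  have := aux_ker_prod f (LinearMap.charpoly f).roots.toFinset
    (fun μ => (LinearMap.charpoly f).roots.count μ)
  refine le_trans ?_ this
  rw [← Finset.prod_multiset_map_count, ← Splits.eq_prod_roots_of_monic
    h (LinearMap.charpoly_monic f), h0]
  simp

lemma aux_nilp {ι F V : Type*} [Field F] [AddCommGroup V] [Module F V] [FiniteDimensional F V]
    (f : ι → Module.End F V) (hc : ∀ i j, Commute (f i) (f j)) (hn : ∀ i, IsNilpotent (f i))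
    (hV : Nontrivial V) : (⨅ i, LinearMap.ker (f i)) ≠ ⊥ := by
  generalize h_dim : Module.finrank F V = n
  induction n using Nat.strongRecOn generalizing V with
  | ind n ih =>
    by_cases h0 : ∀ i, f i = 0
    · simp only [h0, LinearMap.ker_zero, iInf_top]
      intro h
      obtain ⟨x, hx⟩ := exists_ne (0 : V)
      have : x ∈ (⊥ : Submodule F V) := h ▸ Submodule.mem_top
      exact hx (by simpa using this)
    · push_neg at h0
      obtain ⟨i₀, hi₀⟩ := h0
      set K : Submodule F V := LinearMap.ker (f i₀) with hK
      have hKbot : K ≠ ⊥ := by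
        intro h
        obtain ⟨k, hk⟩ := hn i₀
        have hinj : Function.Injective (f i₀) := LinearMap.ker_eq_bot.mp h
        have : Function.Injective ((f i₀) ^ k) := by
          rw [Module.End.coe_pow]
          exact Function.Injective.iterate hinj k
        rw [hk] at this
        obtain ⟨x, hx⟩ := exists_ne (0 : V)
        exact hx (this (by simp))
      have hKtop : K ≠ ⊤ := fun h => hi₀ (LinearMap.ker_eq_top.mp h)
      have hmaps : ∀ i, Set.MapsTo (f i) K K := by
        intro i x hx
        simp only [hK, SetLike.mem_coe, LinearMap.mem_ker] at hx ⊢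
        rw [← Module.End.mul_apply, (hc i₀ i).eq, Module.End.mul_apply, hx, map_zero]
      set g : ι → Module.End F K := fun i => (f i).restrict (hmaps i) with hg
      have hgc : ∀ i j, Commute (g i) (g j) := fun i j => LinearMap.restrict_commute (hc i j) _ _
      have hgn : ∀ i, IsNilpotent (g i) := by
        intro i
        obtain ⟨k, hk⟩ := hn i
        refine ⟨k, ?_⟩
        ext x
        show ((g i ^ k) x).1 = ((0 : Module.End F K) x).1
        have h1 : ((g i ^ k) x).1 = (f i ^ k) x.1 := by
          rw [hg]; dsimp only; rw [Module.End.pow_restrict k (hmaps i)]; rfl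
        rw [h1, hk]
        rfl
      have hKnt : Nontrivial K := Submodule.nontrivial_iff_ne_bot.mpr hKbot
      have hlt : Module.finrank F K < n := h_dim ▸ Submodule.finrank_lt hKtop
      have := ih _ hlt g hgc hgn hKnt rfl
      rw [Submodule.ne_bot_iff] at this ⊢
      obtain ⟨x, hx, hx0⟩ := this
      refine ⟨x.1, ?_, by simpa using hx0⟩
      simp only [Submodule.mem_iInf, LinearMap.mem_ker] at hx ⊢
      intro i
      have := congrArg Subtype.val (hx i)
      exact this

variable [FiniteDimensional F V]

lemma aux_key (f : ι → Module.End F V) (hc : ∀ i j, Commute (f i) (f j)) (τ : ι → F)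
    (hp : (⨅ i, (f i).maxGenEigenspace (τ i)) ≠ ⊥) :
    (⨅ i, (f i).eigenspace (τ i)) ≠ ⊥ := by
  set p := ⨅ i, (f i).maxGenEigenspace (τ i) with hpdef
  have hple : ∀ i, p ≤ (f i).maxGenEigenspace (τ i) := fun i => iInf_le _ i
  have hmaps : ∀ i, Set.MapsTo (f i - algebraMap F (Module.End F V) (τ i)) p p := by
    intro i x hx
    rw [SetLike.mem_coe, hpdef, Submodule.mem_iInf] at hx ⊢
    intro j
    have h1 : (f i) x ∈ (f j).maxGenEigenspace (τ j) :=
      Module.End.mapsTo_maxGenEigenspace_of_comm (hc j i) (τ j) (hx j)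
    have h2 : (τ i) • x ∈ (f j).maxGenEigenspace (τ j) :=
      Submodule.smul_mem _ _ (hx j)
    simpa [Module.algebraMap_end_apply] using Submodule.sub_mem _ h1 h2
  set g : ι → Module.End F p := fun i =>
    (f i - algebraMap F (Module.End F V) (τ i)).restrict (hmaps i) with hg
  have hgc : ∀ i j, Commute (g i) (g j) := by
    intro i j
    refine LinearMap.restrict_commute ?_ _ _
    exact ((hc i j).sub_right (Algebra.commute_algebraMap_right _ _)).sub_left
      ((Algebra.commute_algebraMap_left _ _).sub_right (Algebra.commute_algebraMap_right _ _))
  have hgn : ∀ i, IsNilpotent (g i) := by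
    intro i
    refine ⟨finrank F V, ?_⟩
    ext x
    show ((g i ^ finrank F V) x).1 = ((0 : Module.End F p) x).1
    have h1 : ((g i ^ finrank F V) x).1
        = ((f i - algebraMap F (Module.End F V) (τ i)) ^ finrank F V) x.1 := by
      rw [hg]; dsimp only; rw [Module.End.pow_restrict _ (hmaps i)]; rfl
    rw [h1]
    have hx : x.1 ∈ (f i).genEigenspace (τ i) (finrank F V) := by
      rw [← Module.End.maxGenEigenspace_eq_genEigenspace_finrank]
      exact hple i x.2
    rw [Module.End.genEigenspace_nat, LinearMap.mem_ker] at hx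
    have : (f i - algebraMap F (Module.End F V) (τ i)) = f i - τ i • (1 : Module.End F V) := by
      ext v; simp [Module.algebraMap_end_apply]
    rw [this, hx]; rfl
  have hpnt : Nontrivial p := Submodule.nontrivial_iff_ne_bot.mpr hp
  have hker := aux_nilp g hgc hgn hpnt
  rw [Submodule.ne_bot_iff] at hker ⊢
  obtain ⟨x, hx, hx0⟩ := hker
  refine ⟨x.1, ?_, by simpa using hx0⟩
  rw [Submodule.mem_iInf]
  intro i
  rw [Module.End.mem_eigenspace_iff]
  have := hx
  rw [Submodule.mem_iInf] at this
  have h0 := this i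
  rw [LinearMap.mem_ker] at h0
  have h1 : ((g i) x).1 = (f i) x.1 - τ i • x.1 := by
    show (f i - algebraMap F (Module.End F V) (τ i)) x.1 = _; simp [Module.algebraMap_end_apply]
  have h2 : ((g i) x).1 = 0 := by rw [h0]; rfl
  rw [h1] at h2
  exact sub_eq_zero.mp h2

end AuxLemmas

/-- Let `V` be a finite dimensional vector space over a field `F` and `E` a set of pairwise
commuting triangularizable endomorphisms of `V`. Then the set of simultaneous weights (those
`τ : E → F` whose simultaneous eigenspace is nonzero) is finite, the corresponding generalized
weight spaces `⨅ e ∈ E, maxGenEigenspace e (τ e)` are independent and their sup is all of `V`;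
in particular if `V ≠ 0` there is a simultaneous eigenvector for all elements of `E`. -/
theorem stmt4 {F V : Type*} [Field F] [AddCommGroup V] [Module F V] [FiniteDimensional F V]
    (E : Set (Module.End F V))
    (htri : ∀ e ∈ E, (LinearMap.charpoly e).Splits)
    (hcomm : ∀ e ∈ E, ∀ e' ∈ E, Commute e e') :
    {τ : E → F | (⨅ e : E, Module.End.eigenspace (e : Module.End F V) (τ e)) ≠ ⊥}.Finite ∧
    iSupIndep (fun τ : {τ : E → F //
        (⨅ e : E, Module.End.eigenspace (e : Module.End F V) (τ e)) ≠ ⊥} =>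
      ⨅ e : E, Module.End.maxGenEigenspace (e : Module.End F V) (τ.1 e)) ∧
    (⨆ τ : {τ : E → F // (⨅ e : E, Module.End.eigenspace (e : Module.End F V) (τ e)) ≠ ⊥},
      ⨅ e : E, Module.End.maxGenEigenspace (e : Module.End F V) (τ.1 e)) = ⊤ ∧
    (Nontrivial V → ∃ τ : E → F, ∃ v : V, v ≠ 0 ∧
      ∀ e : E, (e : Module.End F V) v = τ e • v) := by
  set f : E → Module.End F V := fun e => e.1 with hf
  have hcP : ∀ i j : E, Commute (f i) (f j) := fun i j => hcomm i.1 i.2 j.1 j.2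
  have hmapsTo : ∀ (i j : E) (φ : F),
      Set.MapsTo (f i) ((f j).maxGenEigenspace φ) ((f j).maxGenEigenspace φ) :=
    fun i j φ => Module.End.mapsTo_maxGenEigenspace_of_comm (hcP j i) φ
  have hindep := Module.End.independent_iInf_maxGenEigenspace_of_forall_mapsTo f hmapsTo
  have hkey : ∀ τ : E → F, (⨅ e : E, (f e).maxGenEigenspace (τ e)) ≠ ⊥ →
      (⨅ e : E, (f e).eigenspace (τ e)) ≠ ⊥ := fun τ => aux_key f hcP τ
  have hle : ∀ τ : E → F, (⨅ e : E, (f e).eigenspace (τ e)) ≤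
      ⨅ e : E, (f e).maxGenEigenspace (τ e) :=
    fun τ => iInf_mono fun e => ((f e).genEigenspace (τ e)).monotone le_top
  have hsub : {τ : E → F | (⨅ e : E, (f e).eigenspace (τ e)) ≠ ⊥} ⊆
      {τ : E → F | (⨅ e : E, (f e).maxGenEigenspace (τ e)) ≠ ⊥} := by
    intro τ hτ hbot
    exact hτ (le_bot_iff.mp (hbot ▸ hle τ))
  have hfin : {τ : E → F | (⨅ e : E, (f e).eigenspace (τ e)) ≠ ⊥}.Finite :=
    Set.Finite.subset (WellFoundedGT.finite_ne_bot_of_iSupIndep hindep) hsub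
  have htop := Module.End.iSup_iInf_maxGenEigenspace_eq_top_of_iSup_maxGenEigenspace_eq_top_of_commute
    f (fun i j _ => hcP i j) (fun e => aux_sup_top (f e) (htri e.1 e.2))
  have hsup : (⨆ τ : {τ : E → F // (⨅ e : E, (f e).eigenspace (τ e)) ≠ ⊥},
      ⨅ e : E, (f e).maxGenEigenspace (τ.1 e)) = ⊤ := by
    refine le_antisymm le_top ?_
    rw [← htop]
    refine iSup_le fun χ => ?_
    by_cases hχ : (⨅ e : E, (f e).eigenspace (χ e)) ≠ ⊥
    · exact le_iSup (fun τ : {τ : E → F // (⨅ e : E, (f e).eigenspace (τ e)) ≠ ⊥} =>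
        ⨅ e : E, (f e).maxGenEigenspace (τ.1 e)) ⟨χ, hχ⟩
    · have : (⨅ e : E, (f e).maxGenEigenspace (χ e)) = ⊥ := by
        by_contra h
        exact hχ (hkey χ h)
      rw [this]
      exact bot_le
  refine ⟨hfin, hindep.comp Subtype.val_injective, hsup, ?_⟩
  intro hV
  have hne : Nonempty {τ : E → F // (⨅ e : E, (f e).eigenspace (τ e)) ≠ ⊥} := by
    by_contra h
    rw [not_nonempty_iff] at h
    rw [iSup_of_empty] at hsup
    exact bot_ne_top hsup
  obtain ⟨⟨τ, hτ⟩⟩ := hne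
  obtain ⟨v, hv, hv0⟩ := Submodule.ne_bot_iff _ |>.mp hτ
  refine ⟨τ, v, hv0, fun e => ?_⟩
  rw [Submodule.mem_iInf] at hv
  exact Module.End.mem_eigenspace_iff.mp (hv e)
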